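/- If T is a tree and v is a strong support vertex of T (a vertex with at least two leaf neighbors), with leaf neighbors v₁ and v₂, then subdividing the two edges vv₁ and vv₂ strictly increases the total domination number; consequently sd_{γ_t}(T) ≤ 2. -/

import Mathlib

open SimpleGraph

variable {V : Type*}

/-- `S` is a total dominating set of `G`. -/
def IsTotalDomSet (G : SimpleGraph V) (S : Set V) : Prop :=
  ∀ v : V, ∃ u ∈ S, G.Adj v u

/-- The total domination number. -/
noncomputable def gammaT (G : SimpleGraph V) [Fintype V] : ℕ :=
  sInf {n | ∃ S : Finset V, S.card = n ∧ IsTotalDomSet G ↑S}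

/-- The graph obtained from `G` by subdividing each edge in `F` once. -/
def subdivide (G : SimpleGraph V) (F : Finset (Sym2 V)) :
    SimpleGraph (V ⊕ {e : Sym2 V // e ∈ F}) where
  Adj x y :=
    match x, y with
    | Sum.inl u, Sum.inl v => G.Adj u v ∧ s(u, v) ∉ F
    | Sum.inl u, Sum.inr e => u ∈ e.1
    | Sum.inr e, Sum.inl u => u ∈ e.1
    | Sum.inr _, Sum.inr _ => False
  symm := by
    refine ⟨?_⟩
    rintro (u | e) (v | f) h
    · exact ⟨h.1.symm, by rw [Sym2.eq_swap]; exact h.2⟩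
    · exact h
    · exact h
    · exact h
  loopless := by
    refine ⟨?_⟩
    rintro (u | e) h
    · exact G.irrefl h.1
    · exact h

/-- The total domination subdivision number. -/
noncomputable def sdGammaT (G : SimpleGraph V) [Fintype V] [DecidableEq V] : ℕ :=
  sInf {k | ∃ F : Finset (Sym2 V), ↑F ⊆ G.edgeSet ∧ F.card = k ∧
    gammaT G < gammaT (subdivide G F)}

def IsLeaf (G : SimpleGraph V) (v : V) : Prop := ∃! u, G.Adj v u

def IsSupport (G : SimpleGraph V) (v : V) : Prop := ∃ u, G.Adj v u ∧ IsLeaf G u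

def IsWeakSupport (G : SimpleGraph V) (v : V) : Prop := ∃! u, G.Adj v u ∧ IsLeaf G u

def IsStrongSupport (G : SimpleGraph V) (v : V) : Prop :=
  ∃ u w, u ≠ w ∧ G.Adj v u ∧ G.Adj v w ∧ IsLeaf G u ∧ IsLeaf G w

def Is2Packing (G : SimpleGraph V) (S : Set V) : Prop :=
  ∀ u ∈ S, ∀ v ∈ S, u ≠ v → 3 ≤ G.dist u v

noncomputable def packingNumber (G : SimpleGraph V) [Fintype V] : ℕ :=
  sSup {n | ∃ S : Finset V, S.card = n ∧ Is2Packing G ↑S}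

def IsPendantEdge (G : SimpleGraph V) (e : Sym2 V) : Prop :=
  ∃ u v, e = s(u, v) ∧ G.Adj u v ∧ IsLeaf G u

/-- Distance between two edges. -/
noncomputable def edgeDist (G : SimpleGraph V) (e f : Sym2 V) : ℕ :=
  sInf {n | ∃ u ∈ e, ∃ v ∈ f, G.dist u v = n}

/-- Distance from an edge to a set of edges. -/
noncomputable def edistToSet (G : SimpleGraph V) (e : Sym2 V) (F : Set (Sym2 V)) : ℕ :=
  sInf {n | ∃ f ∈ F, edgeDist G e f = n}

/-- Properties (a), (b), (c) of an edge set `F` in `T`. -/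
def PropertyABC (T : SimpleGraph V) (F : Set (Sym2 V)) : Prop :=
  (∀ e, IsPendantEdge T e → e ∈ F) ∧
  (∀ e ∈ F, edistToSet T e (F \ {e}) = 3) ∧
  (∀ e ∈ F, ∀ f ∈ F, e ≠ f →
    ∃! l : List (Sym2 V),
      l.head? = some e ∧ l.getLast? = some f ∧ (∀ x ∈ l, x ∈ F) ∧
      l.Chain' (fun a b => edgeDist T a b = 3))

/-- Subdividing the two pendant edges at a strong support vertex of a tree
increases the total domination number; hence `sd_{γ_t}(T) ≤ 2`. -/
theorem strong_support_subdivide {V : Type*} [Fintype V] [DecidableEq V]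
    (T : SimpleGraph V) (hT : T.IsTree) (v v₁ v₂ : V) (h12 : v₁ ≠ v₂)
    (h1 : T.Adj v v₁) (h2 : T.Adj v v₂) (hl1 : IsLeaf T v₁) (hl2 : IsLeaf T v₂) :
    gammaT T < gammaT (subdivide T {s(v, v₁), s(v, v₂)}) ∧ sdGammaT T ≤ 2 := by
  classical
  set F : Finset (Sym2 V) := {s(v, v₁), s(v, v₂)} with hF
  have hvv1 : v ≠ v₁ := T.ne_of_adj h1
  have hvv2 : v ≠ v₂ := T.ne_of_adj h2
  have hne : s(v, v₁) ≠ s(v, v₂) := by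
    intro h
    rw [Sym2.eq_iff] at h
    rcases h with ⟨_, h⟩ | ⟨h, _⟩
    · exact h12 h
    · exact hvv2 h
  have hmem1 : s(v, v₁) ∈ F := by simp [hF]
  have hmem2 : s(v, v₂) ∈ F := by simp [hF]
  set w₁ : V ⊕ {e : Sym2 V // e ∈ F} := Sum.inr ⟨s(v, v₁), hmem1⟩ with hw1
  set w₂ : V ⊕ {e : Sym2 V // e ∈ F} := Sum.inr ⟨s(v, v₂), hmem2⟩ with hw2
  have hw12 : w₁ ≠ w₂ := by
    simp only [hw1, hw2]
    intro h
    exact hne (congrArg Subtype.val (Sum.inr_injective h))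
  -- leaf uniqueness
  have leaf1 : ∀ y, T.Adj v₁ y → y = v := by
    obtain ⟨u, hu, huniq⟩ := hl1
    intro y hy
    exact (huniq y hy).trans (huniq v h1.symm).symm
  have leaf2 : ∀ y, T.Adj v₂ y → y = v := by
    obtain ⟨u, hu, huniq⟩ := hl2
    intro y hy
    exact (huniq y hy).trans (huniq v h2.symm).symm
  -- every vertex of T has a neighbor
  have hnbr : ∀ x : V, ∃ y, T.Adj x y := by
    intro x
    by_cases hx : x = v
    · exact ⟨v₁, hx ▸ h1⟩
    · obtain ⟨p⟩ := hT.isConnected.preconnected x v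
      cases p with
      | nil => exact absurd rfl hx
      | cons h _ => exact ⟨_, h⟩
  -- characterize edges of F
  have hFmem : ∀ e : Sym2 V, e ∈ F → e = s(v, v₁) ∨ e = s(v, v₂) := by
    intro e he
    rcases Finset.mem_insert.mp he with h | h
    · exact Or.inl h
    · exact Or.inr (Finset.mem_singleton.mp h)
  -- membership in elements of F forces x ∈ {v, v₁, v₂}
  have hFvert : ∀ (x : V) (e : {e : Sym2 V // e ∈ F}), x ∈ e.1 → x = v ∨ x = v₁ ∨ x = v₂ := by
    rintro x ⟨e, he⟩ hx
    rcases hFmem e he with rfl | rfl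
    · rcases Sym2.mem_iff.mp hx with h | h
      · exact Or.inl h
      · exact Or.inr (Or.inl h)
    · rcases Sym2.mem_iff.mp hx with h | h
      · exact Or.inl h
      · exact Or.inr (Or.inr h)
  -- the only neighbor of v₁ in T' is w₁
  have hnbr_v1 : ∀ u, (subdivide T F).Adj (Sum.inl v₁) u → u = w₁ := by
    rintro (y | e) h
    · have h' : T.Adj v₁ y ∧ s(v₁, y) ∉ F := h
      have hyv : y = v := leaf1 y h'.1
      exfalso
      apply h'.2
      rw [hyv, Sym2.eq_swap]
      exact hmem1
    · have h' : v₁ ∈ e.1 := h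
      rcases hFmem e.1 e.2 with he | he
      · simp only [hw1]
        congr 1
        exact Subtype.ext he
      · exfalso
        rw [he] at h'
        rcases Sym2.mem_iff.mp h' with h'' | h''
        · exact hvv1 h''.symm
        · exact h12 h''
  have hnbr_v2 : ∀ u, (subdivide T F).Adj (Sum.inl v₂) u → u = w₂ := by
    rintro (y | e) h
    · have h' : T.Adj v₂ y ∧ s(v₂, y) ∉ F := h
      have hyv : y = v := leaf2 y h'.1
      exfalso
      apply h'.2
      rw [hyv, Sym2.eq_swap]
      exact hmem2
    · have h' : v₂ ∈ e.1 := h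
      rcases hFmem e.1 e.2 with he | he
      · exfalso
        rw [he] at h'
        rcases Sym2.mem_iff.mp h' with h'' | h''
        · exact hvv2 h''.symm
        · exact h12 h''.symm
      · simp only [hw2]
        congr 1
        exact Subtype.ext he
  -- basic adjacencies in T'
  have adj_v1w1 : (subdivide T F).Adj (Sum.inl v₁) w₁ := by
    show v₁ ∈ s(v, v₁)
    exact Sym2.mem_mk_right v v₁
  have adj_v2w2 : (subdivide T F).Adj (Sum.inl v₂) w₂ := by
    show v₂ ∈ s(v, v₂)
    exact Sym2.mem_mk_right v v₂
  have adj_vw1 : (subdivide T F).Adj (Sum.inl v) w₁ := by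
    show v ∈ s(v, v₁)
    exact Sym2.mem_mk_left v v₁
  have adj_vw2 : (subdivide T F).Adj (Sum.inl v) w₂ := by
    show v ∈ s(v, v₂)
    exact Sym2.mem_mk_left v v₂
  -- the set defining gammaT (subdivide T F) is nonempty : univ is a TDS
  have hT'univ : IsTotalDomSet (subdivide T F) ↑(Finset.univ : Finset (V ⊕ {e : Sym2 V // e ∈ F})) := by
    rintro (x | e)
    · by_cases hx1 : x = v₁
      · exact ⟨w₁, by simp, hx1 ▸ adj_v1w1⟩
      by_cases hx2 : x = v₂
      · exact ⟨w₂, by simp, hx2 ▸ adj_v2w2⟩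
      by_cases hxv : x = v
      · exact ⟨w₁, by simp, hxv ▸ adj_vw1⟩
      obtain ⟨y, hy⟩ := hnbr x
      refine ⟨Sum.inl y, by simp, ?_⟩
      show T.Adj x y ∧ s(x, y) ∉ F
      refine ⟨hy, ?_⟩
      intro hmem
      rcases hFmem _ hmem with h | h <;> rw [Sym2.eq_iff] at h <;>
        rcases h with ⟨ha, hb⟩ | ⟨ha, hb⟩
      · exact hxv ha
      · exact hx1 ha
      · exact hxv ha
      · exact hx2 ha
    · refine ⟨Sum.inl v, by simp, ?_⟩
      show v ∈ e.1
      rcases hFmem e.1 e.2 with he | he <;> rw [he] <;> exact Sym2.mem_mk_left _ _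
  have hT'ne : {n | ∃ S : Finset (V ⊕ {e : Sym2 V // e ∈ F}), S.card = n ∧
      IsTotalDomSet (subdivide T F) ↑S}.Nonempty :=
    ⟨_, Finset.univ, rfl, hT'univ⟩
  -- obtain a minimum TDS S' of T'
  obtain ⟨S', hScard, hS'⟩ := Nat.sInf_mem hT'ne
  have hw1S : w₁ ∈ S' := by
    obtain ⟨u, hu, hadj⟩ := hS' (Sum.inl v₁)
    rwa [← hnbr_v1 u hadj]
  have hw2S : w₂ ∈ S' := by
    obtain ⟨u, hu, hadj⟩ := hS' (Sum.inl v₂)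
    rwa [← hnbr_v2 u hadj]
  -- modified TDS S'' containing v and avoiding v₁, v₂
  set S'' : Finset (V ⊕ {e : Sym2 V // e ∈ F}) :=
    insert (Sum.inl v) (S' \ {Sum.inl v₁, Sum.inl v₂}) with hS''def
  have hw1S'' : w₁ ∈ S'' := by
    apply Finset.mem_insert_of_mem
    rw [Finset.mem_sdiff]
    exact ⟨hw1S, by simp [hw1]⟩
  have hw2S'' : w₂ ∈ S'' := by
    apply Finset.mem_insert_of_mem
    rw [Finset.mem_sdiff]
    exact ⟨hw2S, by simp [hw2]⟩
  have hvS'' : Sum.inl v ∈ S'' := Finset.mem_insert_self _ _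
  -- card S'' ≤ card S'
  have hcard'' : S''.card ≤ S'.card := by
    -- to dominate w₁, either v or v₁ is in S'
    obtain ⟨u, hu, hadj⟩ := hS' w₁
    have hu' : u = Sum.inl v ∨ u = Sum.inl v₁ := by
      obtain (y | e) := u
      · have h' : y ∈ s(v, v₁) := hadj
        rcases Sym2.mem_iff.mp h' with h | h
        · exact Or.inl (by rw [h])
        · exact Or.inr (by rw [h])
      · exact absurd hadj (fun h => h)
    rcases hu' with rfl | rfl
    · apply Finset.card_le_card
      apply Finset.insert_subset hu
      exact Finset.sdiff_subset
    · have h1' : (S' \ {Sum.inl v₁, Sum.inl v₂}).card ≤ (S'.erase (Sum.inl v₁)).card := by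
        apply Finset.card_le_card
        intro x hx
        rw [Finset.mem_sdiff] at hx
        rw [Finset.mem_erase]
        refine ⟨?_, hx.1⟩
        intro h
        exact hx.2 (by simp [h])
      have h2' : (S'.erase (Sum.inl v₁)).card = S'.card - 1 :=
        Finset.card_erase_of_mem hu
      have h3' : 1 ≤ S'.card := Finset.card_pos.mpr ⟨w₁, hw1S⟩
      calc S''.card ≤ (S' \ {Sum.inl v₁, Sum.inl v₂}).card + 1 := Finset.card_insert_le _ _
        _ ≤ (S'.card - 1) + 1 := by omega
        _ = S'.card := by omega
  -- S'' is a TDS of T'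
  have hS''tds : IsTotalDomSet (subdivide T F) ↑S'' := by
    intro x
    obtain ⟨u, hu, hadj⟩ := hS' x
    by_cases hu1 : u = Sum.inl v₁
    · have hx : x = w₁ := hnbr_v1 x (hu1 ▸ hadj).symm
      exact ⟨Sum.inl v, by simpa using hvS'', hx ▸ adj_vw1.symm⟩
    by_cases hu2 : u = Sum.inl v₂
    · have hx : x = w₂ := hnbr_v2 x (hu2 ▸ hadj).symm
      exact ⟨Sum.inl v, by simpa using hvS'', hx ▸ adj_vw2.symm⟩
    · refine ⟨u, ?_, hadj⟩
      rw [Finset.mem_coe, hS''def]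
      apply Finset.mem_insert_of_mem
      rw [Finset.mem_sdiff]
      exact ⟨Finset.mem_coe.mp hu, by simp [hu1, hu2]⟩
  -- project to V
  set f : (V ⊕ {e : Sym2 V // e ∈ F}) → V := Sum.elim id (fun _ => v₁) with hfdef
  set S : Finset V := S''.image f with hSdef
  have hfw1 : f w₁ = v₁ := rfl
  have hfw2 : f w₂ = v₁ := rfl
  have hv1S : v₁ ∈ S := Finset.mem_image.mpr ⟨w₁, hw1S'', rfl⟩
  have hvS : v ∈ S := Finset.mem_image.mpr ⟨Sum.inl v, hvS'', rfl⟩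
  -- card S ≤ card S'' - 1
  have himg : S = (S''.erase w₂).image f := by
    apply Finset.Subset.antisymm
    · intro b hb
      obtain ⟨a, ha, rfl⟩ := Finset.mem_image.mp hb
      by_cases haw : a = w₂
      · exact Finset.mem_image.mpr ⟨w₁, Finset.mem_erase.mpr ⟨hw12, hw1S''⟩, by rw [haw, hfw1, hfw2]⟩
      · exact Finset.mem_image.mpr ⟨a, Finset.mem_erase.mpr ⟨haw, ha⟩, rfl⟩
    · exact Finset.image_subset_image (Finset.erase_subset _ _)
  have hcardS : S.card ≤ S''.card - 1 := by
    rw [himg, ← Finset.card_erase_of_mem hw2S'']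
    exact Finset.card_image_le
  -- S is a TDS of T
  have hStds : IsTotalDomSet T ↑S := by
    intro x
    by_cases hx1 : x = v₁
    · exact ⟨v, hvS, hx1 ▸ h1.symm⟩
    by_cases hx2 : x = v₂
    · exact ⟨v, hvS, hx2 ▸ h2.symm⟩
    by_cases hxv : x = v
    · exact ⟨v₁, hv1S, hxv ▸ h1⟩
    obtain ⟨u, hu, hadj⟩ := hS''tds (Sum.inl x)
    obtain (y | e) := u
    · have h' : T.Adj x y ∧ s(x, y) ∉ F := hadj
      exact ⟨y, Finset.mem_image.mpr ⟨Sum.inl y, by simpa using hu, rfl⟩, h'.1⟩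
    · exfalso
      have h' : x ∈ e.1 := hadj
      rcases hFvert x e h' with h | h | h
      · exact hxv h
      · exact hx1 h
      · exact hx2 h
  -- conclude the strict inequality
  have hge1 : 1 ≤ S''.card := Finset.card_pos.mpr ⟨w₁, hw1S''⟩
  have hgT : gammaT T ≤ S.card := Nat.sInf_le ⟨S, rfl, hStds⟩
  have hmain : gammaT T < gammaT (subdivide T F) := by
    have hg' : S'.card = gammaT (subdivide T F) := hScard
    omega
  refine ⟨hmain, ?_⟩
  apply Nat.sInf_le
  refine ⟨F, ?_, Finset.card_pair hne, hmain⟩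
  intro e he
  simp only [hF, Finset.coe_insert, Set.mem_insert_iff, Finset.coe_singleton,
    Set.mem_singleton_iff] at he
  rcases he with rfl | rfl
  · exact h1
  · exact h2
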